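/- If the Gram matrix G := Cᵀ * C is invertible, then the vector r := e − C.mulVec (G⁻¹.mulVec (Cᵀ.mulVec e − t)) satisfies Cᵀ.mulVec r = t, and for every r' with Cᵀ.mulVec r' = t one has ‖r − e‖ ≤ ‖r' − e‖, with equality only if r' = r. (Closed-form Ortho erasure in the full-column-rank case.) -/

import Mathlib

open Matrix

/-- Closed-form Ortho erasure in the full-column-rank case:
if the Gram matrix `G := Cᵀ * C` is invertible, then
`r := e − C.mulVec (G⁻¹.mulVec (Cᵀ.mulVec e − t))` is feasible and is the unique
minimizer of the Euclidean distance to `e` over the feasible set. -/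
theorem ortho_closed_form_full_rank {d n : ℕ}
    (C : Matrix (Fin d) (Fin n) ℝ) (e : EuclideanSpace ℝ (Fin d)) (t : Fin n → ℝ)
    (hG : IsUnit (Cᵀ * C)) :
    Cᵀ.mulVec
        (e - (WithLp.equiv 2 (Fin d → ℝ)).symm
          (C.mulVec ((Cᵀ * C)⁻¹.mulVec (Cᵀ.mulVec e - t)))) = t ∧
    ∀ r' : EuclideanSpace ℝ (Fin d), Cᵀ.mulVec r' = t →
      ‖(e - (WithLp.equiv 2 (Fin d → ℝ)).symm
          (C.mulVec ((Cᵀ * C)⁻¹.mulVec (Cᵀ.mulVec e - t)))) - e‖ ≤ ‖r' - e‖ ∧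
      (‖(e - (WithLp.equiv 2 (Fin d → ℝ)).symm
          (C.mulVec ((Cᵀ * C)⁻¹.mulVec (Cᵀ.mulVec e - t)))) - e‖ = ‖r' - e‖ →
        r' = e - (WithLp.equiv 2 (Fin d → ℝ)).symm
          (C.mulVec ((Cᵀ * C)⁻¹.mulVec (Cᵀ.mulVec e - t)))) := by
  have hdet : IsUnit (Cᵀ * C).det := (Matrix.isUnit_iff_isUnit_det _).mp hG
  set u : Fin n → ℝ := (Cᵀ * C)⁻¹.mulVec (Cᵀ.mulVec e - t) with hu
  set r : EuclideanSpace ℝ (Fin d) :=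
    e - (WithLp.equiv 2 (Fin d → ℝ)).symm (C.mulVec u) with hr
  have hre : (r - e : EuclideanSpace ℝ (Fin d)) = fun i => -(C.mulVec u i) := by
    funext i
    simp [hr, PiLp.toLp_apply]
  have hfeas : Cᵀ.mulVec r = t := by
    have h1 : Cᵀ.mulVec (r : Fin d → ℝ) =
        Cᵀ.mulVec e - Cᵀ.mulVec (C.mulVec u) := by
      have : (r : Fin d → ℝ) =
          (WithLp.equiv 2 (Fin d → ℝ)) e - C.mulVec u := rfl
      rw [this, Matrix.mulVec_sub]
      rfl
    have h2 : Cᵀ.mulVec (C.mulVec u) = Cᵀ.mulVec e - t := by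
      rw [Matrix.mulVec_mulVec, hu, Matrix.mulVec_mulVec,
        Matrix.mul_nonsing_inv _ hdet, Matrix.one_mulVec]
    rw [h1, h2]
    abel
  refine ⟨hfeas, fun r' hr' => ?_⟩
  have horth : inner ℝ (r' - r) (r - e) = (0 : ℝ) := by
    have hsub : Cᵀ.mulVec ((r' - r : EuclideanSpace ℝ (Fin d)) : Fin d → ℝ) = 0 := by
      have : ((r' - r : EuclideanSpace ℝ (Fin d)) : Fin d → ℝ)
          = (r' : Fin d → ℝ) - r := rfl
      rw [this, Matrix.mulVec_sub, hr', hfeas, sub_self]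
    calc inner ℝ (r' - r) (r - e)
        = ((r' - r : EuclideanSpace ℝ (Fin d)) : Fin d → ℝ) ⬝ᵥ
            ((r - e : EuclideanSpace ℝ (Fin d)) : Fin d → ℝ) := by
          simp [PiLp.inner_apply, dotProduct, mul_comm]
      _ = -(((r' - r : EuclideanSpace ℝ (Fin d)) : Fin d → ℝ) ⬝ᵥ C.mulVec u) := by
          rw [hre]; simp [dotProduct, Finset.sum_neg_distrib, mul_neg]
      _ = -(Cᵀ.mulVec ((r' - r : EuclideanSpace ℝ (Fin d)) : Fin d → ℝ) ⬝ᵥ u) := by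
          rw [Matrix.dotProduct_mulVec, ← Matrix.mulVec_transpose]
      _ = 0 := by rw [hsub]; simp
  have hpyth : ‖r' - e‖ ^ 2 = ‖r' - r‖ ^ 2 + ‖r - e‖ ^ 2 := by
    have : r' - e = (r' - r) + (r - e) := by abel
    rw [this, @norm_add_sq_real, horth]
    ring
  have hle : ‖r - e‖ ≤ ‖r' - e‖ := by
    nlinarith [norm_nonneg (r' - r), norm_nonneg (r - e), norm_nonneg (r' - e)]
  refine ⟨hle, fun heq => ?_⟩
  have hz : ‖r' - r‖ ^ 2 = 0 := by
    have h3 : ‖r' - e‖ ^ 2 = ‖r - e‖ ^ 2 := by rw [heq]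
    linarith
  have : r' - r = 0 := by
    have := pow_eq_zero_iff (n := 2) (by norm_num) |>.mp hz
    exact norm_eq_zero.mp this
  have : r' = r := by linear_combination (norm := abel) this
  simpa [hr] using this
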